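/- Let m ≥ 0, α, β ∈ ℝ, and let u, v : [0,τ] → ℂ solve the nonlinear Dirac ODE system u' = i m v + i α u|v|² + 2iβ(conj(u)v + u conj(v))v, v' = i m u + i α v|u|² + 2iβ(conj(u)v + u conj(v))u, with 𝔰 := |u(0)|² + |v(0)|² satisfying 𝔰·τ ≤ 2c₀ for some c₀ > 0 and τ ∈ (0,1]. Then with c₁ = 4|β|e^{4|β|·2c₀} and m₁' appropriate constants, there is a constant K = K(m,α,β,c₀) such that |u(τ) - u(0)| ≤ K·(1 + |v(0)|² + |u(0)|·|v(0)|)·(|v(0)| + √(𝔰·τ))·τ. In particular, |u(τ) - u(0)| → 0 as τ → 0 uniformly on bounded data. -/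

import Mathlib

noncomputable def diracN1 (m α β : ℝ) (u v : ℂ) : ℂ :=
  Complex.I * m * v + Complex.I * α * u * ((‖v‖ : ℂ))^2 +
    Complex.I * 2 * β * ((starRingEnd ℂ) u * v + u * (starRingEnd ℂ) v) * v

noncomputable def diracN2 (m α β : ℝ) (u v : ℂ) : ℂ :=
  Complex.I * m * u + Complex.I * α * v * ((‖u‖ : ℂ))^2 +
    Complex.I * 2 * β * ((starRingEnd ℂ) u * v + u * (starRingEnd ℂ) v) * u

private lemma exp_sub_one_le' (y : ℝ) : Real.exp y - 1 ≤ y * Real.exp y := by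
  have h : Real.exp (-y) * Real.exp y = 1 := by rw [← Real.exp_add]; simp
  nlinarith [Real.add_one_le_exp (-y), Real.exp_pos y]

private lemma gronwallBound_le' (δ K ε x τ : ℝ) (hK : 0 < K) (hδ : 0 ≤ δ) (hε : 0 ≤ ε)
    (hx0 : 0 ≤ x) (hxτ : x ≤ τ) :
    gronwallBound δ K ε x ≤ Real.exp (K*τ) * (δ + ε*τ) := by
  rw [gronwallBound_of_K_ne_0 hK.ne']
  have hKx : (0:ℝ) ≤ K*x := by positivity
  have he : Real.exp (K*x) ≤ Real.exp (K*τ) := Real.exp_le_exp.2 (by nlinarith)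
  have h1 : Real.exp (K*x) - 1 ≤ (K*x) * Real.exp (K*x) := exp_sub_one_le' _
  have h2 : ε/K * (Real.exp (K*x) - 1) ≤ ε * x * Real.exp (K*x) := by
    have heq : ε/K * ((K*x) * Real.exp (K*x)) = ε * x * Real.exp (K*x) := by
      field_simp
    nlinarith [div_nonneg hε hK.le, Real.exp_pos (K*x)]
  have h3 : ε * x * Real.exp (K*x) ≤ ε * τ * Real.exp (K*τ) := by
    have hεx : ε * x ≤ ε * τ := mul_le_mul_of_nonneg_left hxτ hε
    exact mul_le_mul hεx he (Real.exp_pos _).le (mul_nonneg hε (hx0.trans hxτ))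
  linarith [mul_le_mul_of_nonneg_left he hδ]

set_option maxHeartbeats 1000000 in
private lemma arith_final (m C E c₀ a b t sq S τ : ℝ)
    (hm : 0 ≤ m) (hC0 : 0 < C) (hE0 : 0 < E) (hc₀ : 0 < c₀)
    (ha0 : 0 ≤ a) (hb0 : 0 ≤ b) (ht0 : 0 ≤ t) (hsq0 : 0 ≤ sq)
    (hτ : 0 < τ) (hτ1 : τ ≤ 1) (hS0 : 0 ≤ S)
    (hsq2 : sq^2 = S) (ht2 : t^2 = S*τ) (hsab : sq ≤ a + b) (hSτ : S*τ ≤ 2*c₀) :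
    (m * (E*(b + m*sq*τ)) + C * (sq * (E*(b + m*sq*τ))^2)) * τ
      ≤ (m*E*(1+m) + C*E^2*(1+m)^2*(1+6*c₀) + 1) * (1 + b^2 + a*b) * (b + t) * τ := by
  have hτ0 : (0:ℝ) ≤ τ := hτ.le
  have hsqτ0 : (0:ℝ) ≤ sq*τ := mul_nonneg hsq0 hτ0
  have hsqτt : sq * τ ≤ t := by
    have hA : (sq*τ)^2 ≤ t^2 := by
      have h1 : S*(τ*τ) ≤ S*(τ*1) := by
        apply mul_le_mul_of_nonneg_left _ hS0
        nlinarith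
      calc (sq*τ)^2 = S*(τ*τ) := by rw [← hsq2]; ring
        _ ≤ S*(τ*1) := h1
        _ = t^2 := by rw [ht2]; ring
    nlinarith [ht0, hsqτ0]
  set X : ℝ := 1 + b^2 + a*b with hX
  have hX1 : (1:ℝ) ≤ X := by rw [hX]; nlinarith [mul_nonneg ha0 hb0, sq_nonneg b]
  have hX0 : (0:ℝ) < X := by linarith
  set M : ℝ := E*(b + m*sq*τ) with hM
  have hM0 : (0:ℝ) ≤ M := by
    rw [hM]
    exact mul_nonneg hE0.le (add_nonneg hb0 (mul_nonneg (mul_nonneg hm hsq0) hτ0))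
  have hbt0 : (0:ℝ) ≤ b + t := add_nonneg hb0 ht0
  have hbsτ0 : (0:ℝ) ≤ b + sq*τ := add_nonneg hb0 hsqτ0
  have hM1 : M ≤ E*(1+m)*(b + sq*τ) := by
    rw [hM]
    nlinarith [mul_nonneg hE0.le (add_nonneg (mul_nonneg hm hb0) hsqτ0)]
  have hterm1 : m*M*τ ≤ m*E*(1+m) * (X*(b+t)*τ) := by
    have h1 : M ≤ E*(1+m)*(b+t) := by
      calc M ≤ E*(1+m)*(b+sq*τ) := hM1
        _ ≤ E*(1+m)*(b+t) := by
            apply mul_le_mul_of_nonneg_left (by linarith)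
            exact mul_nonneg hE0.le (by linarith)
    have h2 : m*M*τ ≤ m*(E*(1+m)*(b+t))*τ :=
      mul_le_mul_of_nonneg_right (mul_le_mul_of_nonneg_left h1 hm) hτ0
    have h3 : (b+t)*τ ≤ X*((b+t)*τ) :=
      le_mul_of_one_le_left (mul_nonneg hbt0 hτ0) hX1
    have h4 := mul_le_mul_of_nonneg_left h3
      (mul_nonneg (mul_nonneg hm hE0.le) (by linarith : (0:ℝ) ≤ 1+m))
    nlinarith [h2, h4]
  have hM2 : M^2 ≤ E^2*(1+m)^2*(b+sq*τ)^2 := by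
    have h0 : (0:ℝ) ≤ E*(1+m)*(b+sq*τ) := mul_nonneg (mul_nonneg hE0.le (by linarith)) hbsτ0
    nlinarith [hM1, hM0]
  have hSτ' : sq^2*τ ≤ 2*c₀ := by rw [hsq2]; exact hSτ
  have e1 : sq * b^2 * τ ≤ X * b * τ := by
    have h1 : sq*b^2 ≤ (a+b)*b^2 := mul_le_mul_of_nonneg_right hsab (sq_nonneg b)
    have h2 : (a+b)*b^2 ≤ X*b := by rw [hX]; nlinarith [hb0, ha0]
    exact mul_le_mul_of_nonneg_right (h1.trans h2) hτ0
  have e2 : 2*b*(sq^2*τ)*τ ≤ 4*c₀*b*τ := by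
    nlinarith [mul_le_mul_of_nonneg_left hSτ' (mul_nonneg hb0 hτ0)]
  have e3 : sq*(sq^2*τ)*τ^2 ≤ 2*c₀*t*τ := by
    have s1 : (sq*τ)*(sq^2*τ) ≤ t*(2*c₀) :=
      mul_le_mul hsqτt hSτ' (mul_nonneg (sq_nonneg sq) hτ0) ht0
    have s2 := mul_le_mul_of_nonneg_right s1 hτ0
    nlinarith [s2]
  have hkey : sq*(b+sq*τ)^2*τ ≤ (1+6*c₀)*(X*(b+t)*τ) := by
    have expand : sq*(b+sq*τ)^2*τ = sq*b^2*τ + 2*b*(sq^2*τ)*τ + sq*(sq^2*τ)*τ^2 := by ring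
    have h7 : X*b*τ ≤ X*(b+t)*τ :=
      mul_le_mul_of_nonneg_right (mul_le_mul_of_nonneg_left (by linarith) hX0.le) hτ0
    have h8 : 4*c₀*b*τ + 2*c₀*t*τ ≤ 6*c₀*((b+t)*τ) := by
      nlinarith [mul_nonneg (mul_nonneg hc₀.le hb0) hτ0, mul_nonneg (mul_nonneg hc₀.le ht0) hτ0]
    have h9 : 6*c₀*((b+t)*τ) ≤ 6*c₀*(X*((b+t)*τ)) := by
      apply mul_le_mul_of_nonneg_left
        (le_mul_of_one_le_left (mul_nonneg hbt0 hτ0) hX1) (by linarith)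
    rw [expand]
    nlinarith [e1, e2, e3, h7, h8, h9]
  have hterm2 : C*(sq*M^2)*τ ≤ C*E^2*(1+m)^2*(1+6*c₀)*(X*(b+t)*τ) := by
    have s1 : sq*M^2 ≤ sq*(E^2*(1+m)^2*(b+sq*τ)^2) := mul_le_mul_of_nonneg_left hM2 hsq0
    have s2 : C*(sq*M^2)*τ ≤ C*(sq*(E^2*(1+m)^2*(b+sq*τ)^2))*τ :=
      mul_le_mul_of_nonneg_right (mul_le_mul_of_nonneg_left s1 hC0.le) hτ0
    have s3 : C*(sq*(E^2*(1+m)^2*(b+sq*τ)^2))*τ = C*(E^2*(1+m)^2)*(sq*(b+sq*τ)^2*τ) := by ring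
    have s4 : C*(E^2*(1+m)^2)*(sq*(b+sq*τ)^2*τ)
        ≤ C*(E^2*(1+m)^2)*((1+6*c₀)*(X*(b+t)*τ)) := by
      apply mul_le_mul_of_nonneg_left hkey
      have : (0:ℝ) ≤ E^2*(1+m)^2 := mul_nonneg (sq_nonneg E) (sq_nonneg (1+m))
      exact mul_nonneg hC0.le this
    calc C*(sq*M^2)*τ ≤ C*(sq*(E^2*(1+m)^2*(b+sq*τ)^2))*τ := s2
      _ = C*(E^2*(1+m)^2)*(sq*(b+sq*τ)^2*τ) := s3
      _ ≤ C*(E^2*(1+m)^2)*((1+6*c₀)*(X*(b+t)*τ)) := s4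
      _ = C*E^2*(1+m)^2*(1+6*c₀)*(X*(b+t)*τ) := by ring
  have hrest : (0:ℝ) ≤ X*(b+t)*τ := mul_nonneg (mul_nonneg hX0.le hbt0) hτ0
  nlinarith [hterm1, hterm2, hrest]

private lemma diracN2_eq (m α β : ℝ) (a b : ℂ) : diracN2 m α β a b = diracN1 m α β b a := by
  simp only [diracN1, diracN2]; ring

private lemma dirac_conserve (m α β : ℝ) (a b : ℂ) :
    star (diracN1 m α β a b) * a + star a * diracN1 m α β a b
    + (star (diracN2 m α β a b) * b + star b * diracN2 m α β a b) = 0 := by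
  simp only [diracN1, diracN2, ← starRingEnd_apply, map_add, map_mul, map_pow,
    Complex.conj_I, Complex.conj_ofReal, Complex.conj_conj, map_ofNat]
  ring

private lemma norm_diracN1_le (m α β : ℝ) (hm : 0 ≤ m) (a b : ℂ) :
    ‖diracN1 m α β a b‖ ≤ m * ‖b‖ + (|α| + 4*|β|) * (‖a‖ * ‖b‖^2) := by
  have h3 : ‖(starRingEnd ℂ) a * b + a * (starRingEnd ℂ) b‖ ≤ 2*(‖a‖*‖b‖) := by
    calc ‖(starRingEnd ℂ) a * b + a * (starRingEnd ℂ) b‖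
        ≤ ‖(starRingEnd ℂ) a * b‖ + ‖a * (starRingEnd ℂ) b‖ := norm_add_le _ _
      _ = 2*(‖a‖*‖b‖) := by simp [norm_mul]; try ring
  have hA : ‖Complex.I * (m:ℂ) * b‖ = m * ‖b‖ := by
    simp [norm_mul, abs_of_nonneg hm]
  have hB : ‖Complex.I * (α:ℂ) * a * ((‖b‖ : ℂ))^2‖ = |α| * (‖a‖ * ‖b‖^2) := by
    simp [norm_mul, norm_pow]; try ring
  have hC : ‖Complex.I * 2 * (β:ℂ) * ((starRingEnd ℂ) a * b + a * (starRingEnd ℂ) b) * b‖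
      ≤ 4*|β| * (‖a‖ * ‖b‖^2) := by
    have : ‖Complex.I * 2 * (β:ℂ) * ((starRingEnd ℂ) a * b + a * (starRingEnd ℂ) b) * b‖
        = 2 * |β| * ‖(starRingEnd ℂ) a * b + a * (starRingEnd ℂ) b‖ * ‖b‖ := by
      simp [norm_mul]; try ring
    rw [this]
    have hb := norm_nonneg b
    have hβ := abs_nonneg β
    have h4 : 2*|β| * ‖(starRingEnd ℂ) a * b + a * (starRingEnd ℂ) b‖ * ‖b‖
        ≤ 2*|β| * (2*(‖a‖*‖b‖)) * ‖b‖ := by gcongr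
    have h5 : 2*|β| * (2*(‖a‖*‖b‖)) * ‖b‖ = 4*|β| * (‖a‖ * ‖b‖^2) := by ring
    linarith
  calc ‖diracN1 m α β a b‖
      ≤ ‖Complex.I * (m:ℂ) * b‖ + ‖Complex.I * (α:ℂ) * a * ((‖b‖ : ℂ))^2‖
        + ‖Complex.I * 2 * (β:ℂ) * ((starRingEnd ℂ) a * b + a * (starRingEnd ℂ) b) * b‖ :=
        norm_add₃_le
    _ ≤ m * ‖b‖ + |α| * (‖a‖ * ‖b‖^2) + 4*|β| * (‖a‖ * ‖b‖^2) := by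
        rw [hA, hB]; exact add_le_add_right hC _
    _ = m * ‖b‖ + (|α| + 4*|β|) * (‖a‖ * ‖b‖^2) := by ring

set_option maxHeartbeats 1000000 in
theorem stmt18 (m α β c₀ : ℝ) (hm : 0 ≤ m) (hc₀ : 0 < c₀) :
    ∃ K : ℝ, 0 < K ∧
      ∀ (τ : ℝ) (u v : ℝ → ℂ), 0 < τ → τ ≤ 1 →
        (∀ s, HasDerivAt u (diracN1 m α β (u s) (v s)) s) →
        (∀ s, HasDerivAt v (diracN2 m α β (u s) (v s)) s) →
        (‖u 0‖^2 + ‖v 0‖^2) * τ ≤ 2 * c₀ →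
        ‖u τ - u 0‖ ≤ K * (1 + ‖v 0‖^2 + ‖u 0‖ * ‖v 0‖) *
          (‖v 0‖ + Real.sqrt ((‖u 0‖^2 + ‖v 0‖^2) * τ)) * τ := by
  have habs : (0:ℝ) ≤ |α| + 4*|β| := by positivity
  set C : ℝ := |α| + 4*|β| + 1 with hCdef
  have hC1 : (1:ℝ) ≤ C := by rw [hCdef]; linarith
  have hC0 : (0:ℝ) < C := lt_of_lt_of_le one_pos hC1
  set E : ℝ := Real.exp (C * (2*c₀)) with hEdef
  have hE1 : (1:ℝ) ≤ E := by
    rw [hEdef]; have : (0:ℝ) ≤ C * (2*c₀) := by positivity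
    simpa using Real.one_le_exp this
  have hE0 : (0:ℝ) < E := lt_of_lt_of_le one_pos hE1
  refine ⟨m*E*(1+m) + C*E^2*(1+m)^2*(1+6*c₀) + 1, by positivity, ?_⟩
  intro τ u v hτ hτ1 hu hv hsτ
  set a : ℝ := ‖u 0‖ with hadef
  set b : ℝ := ‖v 0‖ with hbdef
  set S : ℝ := ‖u 0‖^2 + ‖v 0‖^2 with hSdef
  have hS0 : (0:ℝ) ≤ S := by positivity
  have ha0 : (0:ℝ) ≤ a := norm_nonneg _
  have hb0 : (0:ℝ) ≤ b := norm_nonneg _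
  set t : ℝ := Real.sqrt (S * τ) with htdef
  have ht0 : (0:ℝ) ≤ t := Real.sqrt_nonneg _
  have ht2 : t^2 = S * τ := Real.sq_sqrt (by positivity)
  -- conservation
  have hcons : ∀ s, ‖u s‖^2 + ‖v s‖^2 = S := by
    intro s
    set F : ℝ → ℂ := fun s => star (u s) * u s + star (v s) * v s with hFdef
    have hF : ∀ x, HasDerivAt F 0 x := by
      intro x
      have h1 := (((hu x).star.mul (hu x)).add ((hv x).star.mul (hv x)))
      have h2 := dirac_conserve m α β (u x) (v x)
      rw [show star (diracN1 m α β (u x) (v x)) * u x + star (u x) * diracN1 m α β (u x) (v x)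
          + (star (diracN2 m α β (u x) (v x)) * v x + star (v x) * diracN2 m α β (u x) (v x))
          = 0 from h2] at h1
      exact h1
    have hFconst : F s = F 0 :=
      is_const_of_deriv_eq_zero (fun x => (hF x).differentiableAt)
        (fun x => (hF x).deriv) s 0
    have hkey : ∀ z : ℂ, star z * z = ((‖z‖^2 : ℝ) : ℂ) := by
      intro z
      rw [Complex.star_def, mul_comm, Complex.mul_conj, Complex.normSq_eq_norm_sq]
    have hthis : ((‖u s‖^2 : ℝ) : ℂ) + ((‖v s‖^2 : ℝ) : ℂ)
        = ((‖u 0‖^2 : ℝ) : ℂ) + ((‖v 0‖^2 : ℝ) : ℂ) := by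
      rw [← hkey (u s), ← hkey (v s), ← hkey (u 0), ← hkey (v 0)]
      simpa [hFdef] using hFconst
    have h3 : (‖u s‖^2 + ‖v s‖^2 : ℝ) = ‖u 0‖^2 + ‖v 0‖^2 := by exact_mod_cast hthis
    rw [hSdef]; exact h3
  set sq : ℝ := Real.sqrt S with hsqdef
  have hsq0 : (0:ℝ) ≤ sq := Real.sqrt_nonneg _
  have hsq2 : sq^2 = S := Real.sq_sqrt hS0
  have hus : ∀ s, ‖u s‖ ≤ sq := by
    intro s
    have h1 : ‖u s‖^2 ≤ S := by have := hcons s; nlinarith [sq_nonneg ‖v s‖]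
    have := Real.sqrt_le_sqrt h1
    rwa [Real.sqrt_sq (norm_nonneg _)] at this
  have hvs : ∀ s, ‖v s‖ ≤ sq := by
    intro s
    have h1 : ‖v s‖^2 ≤ S := by have := hcons s; nlinarith [sq_nonneg ‖u s‖]
    have := Real.sqrt_le_sqrt h1
    rwa [Real.sqrt_sq (norm_nonneg _)] at this
  by_cases hSz : S = 0
  · -- trivial case
    have hu0 : u 0 = 0 := by
      have h := hcons 0
      rw [hSz] at h
      have h1 : ‖u 0‖^2 = 0 := le_antisymm (by linarith [sq_nonneg ‖v 0‖]) (sq_nonneg _)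
      have h2 : ‖u 0‖ = 0 := by
        have := sq_eq_zero_iff.mp h1
        exact this
      simpa using h2
    have huτ : u τ = 0 := by
      have h := hcons τ
      rw [hSz] at h
      have h1 : ‖u τ‖^2 = 0 := le_antisymm (by linarith [sq_nonneg ‖v τ‖]) (sq_nonneg _)
      have h2 : ‖u τ‖ = 0 := by
        have := sq_eq_zero_iff.mp h1
        exact this
      simpa using h2
    have hb' : b = 0 := by
      have h := hcons 0
      rw [hSz] at h
      have h1 : ‖v 0‖^2 = 0 := le_antisymm (by linarith [sq_nonneg ‖u 0‖]) (sq_nonneg _)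
      have h2 : ‖v 0‖ = 0 := by
        have := sq_eq_zero_iff.mp h1
        exact this
      simpa [hbdef] using h2
    have hT : t = 0 := by rw [htdef, hSz]; simp
    rw [huτ, hu0, hb', hT]
    simp
  · have hSpos : 0 < S := lt_of_le_of_ne hS0 (Ne.symm hSz)
    have hKne : C * S ≠ 0 := by positivity
    -- Gronwall for v
    have hgr := norm_le_gronwallBound_of_norm_deriv_right_le (f := v)
      (f' := fun x => diracN2 m α β (u x) (v x)) (δ := b) (K := C*S) (ε := m*sq)
      (a := 0) (b := τ)
      (fun x _ => ((hv x).continuousAt).continuousWithinAt)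
      (fun x _ => (hv x).hasDerivWithinAt)
      (le_refl b)
      (by
        intro x _
        show ‖diracN2 m α β (u x) (v x)‖ ≤ C * S * ‖v x‖ + m * sq
        rw [diracN2_eq]
        have h1 := norm_diracN1_le m α β hm (v x) (u x)
        have h2 := hus x
        have hvx0 := norm_nonneg (v x)
        have hux2 : ‖u x‖^2 ≤ S := by
          have := hcons x; linarith [sq_nonneg ‖v x‖]
        have hαβC : |α| + 4*|β| ≤ C := by rw [hCdef]; linarith
        have p1 : m * ‖u x‖ ≤ m * sq := mul_le_mul_of_nonneg_left h2 hm
        have p2 : ‖v x‖ * ‖u x‖^2 ≤ ‖v x‖ * S := mul_le_mul_of_nonneg_left hux2 hvx0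
        have p3 : (|α| + 4*|β|) * (‖v x‖ * ‖u x‖^2) ≤ C * (‖v x‖ * S) :=
          mul_le_mul hαβC p2 (by positivity) hC0.le
        have p4 : C * (‖v x‖ * S) = C * S * ‖v x‖ := by ring
        linarith)
    set M : ℝ := E * (b + m * sq * τ) with hMdef
    have hM0 : (0:ℝ) ≤ M := by positivity
    have hvM : ∀ x ∈ Set.Icc (0:ℝ) τ, ‖v x‖ ≤ M := by
      intro x hx
      have h := hgr x hx
      rw [sub_zero] at h
      have hKpos : (0:ℝ) < C * S := by positivity
      have hgb := gronwallBound_le' b (C*S) (m*sq) x τ hKpos hb0 (by positivity) hx.1 hx.2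
      have hexpE : Real.exp (C*S*τ) ≤ E := by
        rw [hEdef]
        apply Real.exp_le_exp.2
        have hSτ : S * τ ≤ 2 * c₀ := hsτ
        nlinarith
      have hnn : (0:ℝ) ≤ b + m * sq * τ := by positivity
      have : Real.exp (C*S*τ) * (b + m*sq*τ) ≤ E * (b + m * sq * τ) :=
        mul_le_mul_of_nonneg_right hexpE hnn
      rw [hMdef]
      linarith [hgb, h]
    -- MVT bound for u
    set B : ℝ := m * M + C * (sq * M^2) with hBdef
    have hmvt := norm_image_sub_le_of_norm_deriv_le_segment'
      (f := u) (f' := fun x => diracN1 m α β (u x) (v x)) (a := 0) (b := τ) (C := B)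
      (fun x _ => (hu x).hasDerivWithinAt)
      (by
        intro x hx
        show ‖diracN1 m α β (u x) (v x)‖ ≤ B
        have h1 := norm_diracN1_le m α β hm (u x) (v x)
        have h2 := hus x
        have h3 := hvM x ⟨hx.1, le_of_lt hx.2⟩
        have hvx0 := norm_nonneg (v x)
        have hux0 := norm_nonneg (u x)
        have hαβC : |α| + 4*|β| ≤ C := by rw [hCdef]; linarith
        have p1 : m * ‖v x‖ ≤ m * M := mul_le_mul_of_nonneg_left h3 hm
        have pv2 : ‖v x‖^2 ≤ M^2 := by
          have := pow_le_pow_left₀ hvx0 h3 2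
          simpa using this
        have p2 : ‖u x‖ * ‖v x‖^2 ≤ sq * M^2 :=
          mul_le_mul h2 pv2 (by positivity) hsq0
        have p3 : (|α| + 4*|β|) * (‖u x‖ * ‖v x‖^2) ≤ C * (sq * M^2) :=
          mul_le_mul hαβC p2 (by positivity) hC0.le
        rw [hBdef]
        linarith)
      τ ⟨le_of_lt hτ, le_refl τ⟩
    simp only [sub_zero] at hmvt
    -- final arithmetic
    have hsab : sq ≤ a + b := by
      rw [hsqdef]
      have h1 : S ≤ (a+b)^2 := by
        rw [hSdef, hadef, hbdef]
        nlinarith [mul_nonneg (norm_nonneg (u 0)) (norm_nonneg (v 0))]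
      calc Real.sqrt S ≤ Real.sqrt ((a+b)^2) := Real.sqrt_le_sqrt h1
        _ = a+b := Real.sqrt_sq (by linarith)
    have harith := arith_final m C E c₀ a b t sq S τ hm hC0 hE0 hc₀ ha0 hb0 ht0 hsq0
      hτ hτ1 hS0 hsq2 ht2 hsab hsτ
    calc ‖u τ - u 0‖ ≤ B * τ := hmvt
      _ = (m * (E*(b + m*sq*τ)) + C * (sq * (E*(b + m*sq*τ))^2)) * τ := by
          rw [hBdef, hMdef]
      _ ≤ (m*E*(1+m) + C*E^2*(1+m)^2*(1+6*c₀) + 1) * (1 + b^2 + a*b) * (b + t) * τ := harith
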